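/- Let q be a prime power, n a positive integer, u ∈ F_{q^n} nonzero, and k an integer with 1 ≤ k ≤ n. Let Gab_k = {x ↦ Σ_{i=0}^{k−1} p_i x^{q^i} : p_i ∈ F_{q^n}} ⊆ End_{F_q}(F_{q^n}) and let φ denote the Frobenius x ↦ x^q. Then {P* ∘ φ^{k−1} : P ∈ Gab_k} = Gab_k, where P* denotes the adjoint of P with respect to ⟨·,·⟩_u. That is, the adjoint code Gab_k^{⊤,u} is right equivalent to Gab_k itself. -/

import Mathlib

/-- The trace map of `F_{q^n}/F_q`, written explicitly as
`Tr(x) = x + x^q + ⋯ + x^{q^{n-1}}` (valued in the big field). -/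
def qTr {K : Type*} [CommRing K] (q n : ℕ) (x : K) : K :=
  ∑ i ∈ Finset.range n, x ^ q ^ i

section Aux

variable {K : Type*} [Field K] {p f q n : ℕ} [Fact p.Prime] [CharP K p]

lemma sum_pow_q (hq : q = p ^ f) {ι : Type*} (s : Finset ι) (t : ι → K) (m : ℕ) :
    (∑ i ∈ s, t i) ^ q ^ m = ∑ i ∈ s, t i ^ q ^ m := by
  subst hq
  rw [← pow_mul, sum_pow_char_pow]

lemma pow_q_n [Fintype K] (hcard : Fintype.card K = q ^ n) (x : K) : x ^ q ^ n = x := by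
  rw [← hcard, FiniteField.pow_card]

lemma qTr_pow_q [Fintype K] (hcard : Fintype.card K = q ^ n) (z : K) :
    qTr q n (z ^ q) = qTr q n z := by
  unfold qTr
  have h1 := Finset.sum_range_succ' (fun i => z ^ q ^ i) n
  have h2 := Finset.sum_range_succ (fun i => z ^ q ^ i) n
  simp only [pow_zero, pow_one] at h1 h2
  have hzz : z ^ q ^ n = z := pow_q_n hcard z
  rw [hzz] at h2
  have key : (∑ i ∈ Finset.range n, z ^ q ^ (i + 1)) = ∑ i ∈ Finset.range n, z ^ q ^ i := by
    have := h1.symm.trans h2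
    exact add_right_cancel this
  calc (∑ i ∈ Finset.range n, (z ^ q) ^ q ^ i)
      = ∑ i ∈ Finset.range n, z ^ q ^ (i + 1) := by
        refine Finset.sum_congr rfl fun i _ => ?_
        rw [← pow_mul, ← pow_succ']
    _ = ∑ i ∈ Finset.range n, z ^ q ^ i := key

lemma qTr_pow_q_iter [Fintype K] (hcard : Fintype.card K = q ^ n) (z : K) (m : ℕ) :
    qTr q n (z ^ q ^ m) = qTr q n z := by
  induction m with
  | zero => simp
  | succ m ih =>
    have : z ^ q ^ (m + 1) = (z ^ q ^ m) ^ q := by rw [← pow_mul, ← pow_succ]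
    rw [this, qTr_pow_q hcard, ih]

/-- `Tr(w · y^{q^i}) = Tr(w^{q^{n-i}} · y)` for `i ≤ n`. -/
lemma qTr_adjoint [Fintype K] (hcard : Fintype.card K = q ^ n) {i : ℕ} (hi : i ≤ n)
    (w y : K) : qTr q n (w * y ^ q ^ i) = qTr q n (w ^ q ^ (n - i) * y) := by
  have := qTr_pow_q_iter hcard (w ^ q ^ (n - i) * y) i
  rw [← this, mul_pow, ← pow_mul, ← pow_add, Nat.sub_add_cancel hi, pow_q_n hcard]

lemma qTr_sum (hq : q = p ^ f) {ι : Type*} (s : Finset ι) (t : ι → K) :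
    qTr q n (∑ i ∈ s, t i) = ∑ i ∈ s, qTr q n (t i) := by
  unfold qTr
  rw [Finset.sum_comm]
  exact Finset.sum_congr rfl fun j _ => sum_pow_q hq s t j

/-- Nondegeneracy of the explicit trace form. -/
lemma qTr_nondegen [Fintype K] (hq : q = p ^ f) (hq1 : 1 < q) (hn : 0 < n)
    (hcard : Fintype.card K = q ^ n) (c : K) (h : ∀ y : K, qTr q n (c * y) = 0) :
    c = 0 := by
  set P : Polynomial K := ∑ i ∈ Finset.range n, Polynomial.C (c ^ q ^ i) * Polynomial.X ^ q ^ i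
    with hP
  have heval : ∀ y : K, P.eval y = 0 := by
    intro y
    have : P.eval y = qTr q n (c * y) := by
      simp [hP, qTr, Polynomial.eval_finset_sum, mul_pow]
    rw [this, h]
  have hdeg : P.natDegree ≤ q ^ (n - 1) := by
    refine Polynomial.natDegree_sum_le_of_forall_le _ _ fun i hi => ?_
    refine le_trans (Polynomial.natDegree_C_mul_le _ _) ?_
    rw [Polynomial.natDegree_X_pow]
    exact Nat.pow_le_pow_right (le_of_lt hq1) (Nat.le_sub_one_of_lt (Finset.mem_range.mp hi))
  have hPzero : P = 0 := by
    refine Polynomial.eq_zero_of_natDegree_lt_card_of_eval_eq_zero' P Finset.univ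
      (fun y _ => heval y) ?_
    rw [Finset.card_univ, hcard]
    exact lt_of_le_of_lt hdeg (Nat.pow_lt_pow_right hq1 (Nat.sub_lt hn Nat.one_pos))
  have hcoeff : P.coeff (q ^ (n - 1)) = c ^ q ^ (n - 1) := by
    rw [hP, Polynomial.finset_sum_coeff]
    rw [Finset.sum_eq_single (n - 1)]
    · rw [Polynomial.coeff_C_mul_X_pow]; simp
    · intro i hi hne
      rw [Polynomial.coeff_C_mul_X_pow]
      have : q ^ (n - 1) ≠ q ^ i := fun hcontra => by
        exact hne (Nat.pow_right_injective hq1 hcontra.symm)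
      simp [this]
    · intro hni
      exact absurd (Finset.mem_range.mpr (Nat.sub_lt hn Nat.one_pos)) hni
  rw [hPzero] at hcoeff
  simp only [Polynomial.coeff_zero] at hcoeff
  exact pow_eq_zero_iff (by positivity) |>.mp hcoeff.symm

lemma qTr_sub (hq : q = p ^ f) (a b : K) :
    qTr q n (a - b) = qTr q n a - qTr q n b := by
  unfold qTr
  rw [← Finset.sum_sub_distrib]
  refine Finset.sum_congr rfl fun i _ => ?_
  subst hq
  rw [← pow_mul, sub_pow_char_pow]

lemma pow_q_add_n [Fintype K] (hcard : Fintype.card K = q ^ n) (x : K) (m : ℕ) :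
    x ^ q ^ (n + m) = x ^ q ^ m := by
  rw [pow_add, pow_mul, pow_q_n hcard]

end Aux

theorem adjoint_gabidulin_right_equivalent
    {F K : Type*} [Field F] [Fintype F] [Field K] [Fintype K] [Algebra F K]
    {n k : ℕ} (hn : Module.finrank F K = n) (hk1 : 1 ≤ k) (hkn : k ≤ n)
    (u : K) (hu : u ≠ 0) :
    {f : K → K | ∃ (p : ℕ → K) (g : K → K),
        (∀ x y : K,
          qTr (Fintype.card F) n
              (u * x * ∑ i ∈ Finset.range k, p i * y ^ Fintype.card F ^ i)
            = qTr (Fintype.card F) n (u * g x * y))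
        ∧ ∀ x : K, f x = g (x ^ Fintype.card F ^ (k - 1))}
      = {f : K → K | ∃ p : ℕ → K, ∀ x : K,
          f x = ∑ i ∈ Finset.range k, p i * x ^ Fintype.card F ^ i} := by
  classical
  haveI : CharP K (ringChar F) := charP_of_injective_algebraMap
    (algebraMap F K).injective (ringChar F)
  haveI : Fact (Nat.Prime (ringChar F)) := ⟨CharP.char_is_prime F (ringChar F)⟩
  set q : ℕ := Fintype.card F with hqdef
  obtain ⟨f, _, hqpf⟩ := FiniteField.card F (ringChar F)
  have hq : q = ringChar F ^ (f : ℕ) := hqpf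
  have hq1 : 1 < q := Fintype.one_lt_card
  have hn0 : 0 < n := lt_of_lt_of_le hk1 hkn
  have hcard : Fintype.card K = q ^ n := by rw [← hn]; exact Module.card_eq_pow_finrank
  ext f0
  simp only [Set.mem_setOf_eq]
  constructor
  · rintro ⟨p, g, hrel, hfg⟩
    have hg : ∀ x : K, u * g x = ∑ j ∈ Finset.range k, (u * p j * x) ^ q ^ (n - j) := by
      intro x
      have h0 : ∀ y : K,
          qTr q n ((u * g x - ∑ j ∈ Finset.range k, (u * p j * x) ^ q ^ (n - j)) * y) = 0 := by
        intro y
        rw [sub_mul, qTr_sub hq]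
        have e1 : qTr q n (u * g x * y)
            = qTr q n (u * x * ∑ i ∈ Finset.range k, p i * y ^ q ^ i) := (hrel x y).symm
        have e2 : u * x * ∑ i ∈ Finset.range k, p i * y ^ q ^ i
            = ∑ i ∈ Finset.range k, (u * p i * x) * y ^ q ^ i := by
          rw [Finset.mul_sum]
          exact Finset.sum_congr rfl fun i _ => by ring
        rw [e1, e2, qTr_sum hq, Finset.sum_mul, qTr_sum hq]
        rw [Finset.sum_congr rfl fun j hj => qTr_adjoint hcard
          (le_trans (le_of_lt (Finset.mem_range.mp hj)) hkn) (u * p j * x) y]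
        exact sub_self _
      exact sub_eq_zero.mp (qTr_nondegen hq hq1 hn0 hcard _ h0)
    refine ⟨fun i => u⁻¹ * (u * p (k - 1 - i)) ^ q ^ (n - (k - 1 - i)), fun x => ?_⟩
    have hrefl := Finset.sum_range_reflect
      (fun i => u⁻¹ * (u * p (k - 1 - i)) ^ q ^ (n - (k - 1 - i)) * x ^ q ^ i) k
    rw [hfg x, ← hrefl]
    have : g (x ^ q ^ (k - 1)) = u⁻¹ * (u * g (x ^ q ^ (k - 1))) := by
      field_simp
    rw [this, hg, Finset.mul_sum]
    refine Finset.sum_congr rfl fun j hj => ?_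
    have hjk : j < k := Finset.mem_range.mp hj
    have hjj : k - 1 - (k - 1 - j) = j := by omega
    rw [hjj]
    have hexp : (x ^ q ^ (k - 1)) ^ q ^ (n - j) = x ^ q ^ (k - 1 - j) := by
      rw [← pow_mul, ← pow_add]
      have h1 : k - 1 + (n - j) = n + (k - 1 - j) := by omega
      rw [h1, pow_q_add_n hcard]
    rw [mul_pow, hexp]
    ring
  · rintro ⟨p, hp0⟩
    refine ⟨fun j => u⁻¹ * (u * p (k - 1 - j)) ^ q ^ j,
      fun x => ∑ i ∈ Finset.range k, p i * x ^ q ^ (n - (k - 1) + i), ?_, ?_⟩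
    · intro x y
      have hup : ∀ j, u * (u⁻¹ * (u * p (k - 1 - j)) ^ q ^ j)
          = (u * p (k - 1 - j)) ^ q ^ j := by
        intro j; field_simp
      have e2 : u * x * ∑ j ∈ Finset.range k,
            (u⁻¹ * (u * p (k - 1 - j)) ^ q ^ j) * y ^ q ^ j
          = ∑ j ∈ Finset.range k,
            ((u * p (k - 1 - j)) ^ q ^ j * x) * y ^ q ^ j := by
        rw [Finset.mul_sum]
        refine Finset.sum_congr rfl fun j _ => ?_
        field_simp
      rw [e2, qTr_sum hq]
      rw [Finset.sum_congr rfl fun j hj => qTr_adjoint hcard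
        (le_trans (le_of_lt (Finset.mem_range.mp hj)) hkn) ((u * p (k - 1 - j)) ^ q ^ j * x) y]
      have e3 : ∀ j ∈ Finset.range k,
          ((u * p (k - 1 - j)) ^ q ^ j * x) ^ q ^ (n - j)
            = u * p (k - 1 - j) * x ^ q ^ (n - j) := by
        intro j hj
        have hjk : j < k := Finset.mem_range.mp hj
        rw [mul_pow, ← pow_mul, ← pow_add]
        have h1 : j + (n - j) = n := by omega
        rw [h1, pow_q_n hcard]
      rw [Finset.sum_congr rfl fun j hj => by rw [e3 j hj]]
      have e4 : u * (∑ i ∈ Finset.range k, p i * x ^ q ^ (n - (k - 1) + i)) * y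
          = ∑ i ∈ Finset.range k, (u * p i * x ^ q ^ (n - (k - 1) + i)) * y := by
        rw [Finset.mul_sum, Finset.sum_mul]
        exact Finset.sum_congr rfl fun i _ => by ring
      rw [e4, qTr_sum hq]
      have hrefl := Finset.sum_range_reflect
        (fun i => qTr q n (u * p i * x ^ q ^ (n - (k - 1) + i) * y)) k
      rw [← hrefl]
      refine Finset.sum_congr rfl fun j hj => ?_
      have hjk : j < k := Finset.mem_range.mp hj
      have h1 : n - (k - 1) + (k - 1 - j) = n - j := by omega
      rw [h1]
    · intro x
      rw [hp0 x]
      refine Finset.sum_congr rfl fun i hi => ?_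
      congr 1
      rw [← pow_mul, ← pow_add]
      have h1 : k - 1 + (n - (k - 1) + i) = n + i := by omega
      rw [h1, pow_q_add_n hcard]
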